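/- arXiv:2407.01783 — 4 statements merged into one kernel-verified Lean document; each statement's English description precedes it below -/
import Mathlib

section
/- Let A be symmetric positive definite, B have full row rank, and M be symmetric positive definite (the pressure mass matrix). For λ ≥ 0 define A_λ = A + λ B^T M^{-1} B and S_λ = B A_λ^{-1} B^T. Then S_λ^{-1} = λ M^{-1} + (B A^{-1} B^T)^{-1}. -/
open Matrix

lemma aux_posSemidef_smul {m : ℕ} {N : Matrix (Fin m) (Fin m) ℝ}
    (hN : N.PosSemidef) {l : ℝ} (hl : 0 ≤ l) : (l • N).PosSemidef := by
  refine posSemidef_iff_dotProduct_mulVec.mpr ⟨?_, fun x => ?_⟩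
  · unfold Matrix.IsHermitian
    rw [conjTranspose_smul, hN.1.eq]
    simp
  · have := (posSemidef_iff_dotProduct_mulVec.mp hN).2 x
    simp only [smul_mulVec, dotProduct_smul, smul_eq_mul]
    positivity

lemma aux_posDef_conj {m n : ℕ} {N : Matrix (Fin n) (Fin n) ℝ} (hN : N.PosDef)
    {B : Matrix (Fin m) (Fin n) ℝ} (hB : Function.Injective B.vecMul) :
    (B * N * Bᵀ).PosDef := by
  refine posDef_iff_dotProduct_mulVec.mpr ⟨?_, fun x hx => ?_⟩
  · have := (hN.posSemidef.mul_mul_conjTranspose_same B).isHermitian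
    rwa [conjTranspose_eq_transpose_of_trivial] at this
  · have hy : B.vecMul x ≠ 0 := fun h => hx (hB (by simpa using h))
    have := (posDef_iff_dotProduct_mulVec.mp hN).2 (x := B.vecMul x) hy
    simpa only [star_trivial, ← mulVec_mulVec, dotProduct_mulVec, mulVec_transpose]
      using this

/-- Augmented Lagrangian identity: with `A` SPD, `B` of full row rank, `M` SPD and `λ ≥ 0`,
setting `A_λ = A + λ Bᵀ M⁻¹ B` and `S_λ = B A_λ⁻¹ Bᵀ`, one has
`S_λ⁻¹ = λ M⁻¹ + (B A⁻¹ Bᵀ)⁻¹`. -/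
theorem augmented_lagrangian_schur_inverse {n m : ℕ}
    (A : Matrix (Fin n) (Fin n) ℝ) (B : Matrix (Fin m) (Fin n) ℝ)
    (M : Matrix (Fin m) (Fin m) ℝ)
    (hA : A.PosDef) (hB : B.rank = m) (hM : M.PosDef)
    (l : ℝ) (hl : 0 ≤ l) :
    (B * (A + l • (Bᵀ * M⁻¹ * B))⁻¹ * Bᵀ)⁻¹ = l • M⁻¹ + (B * A⁻¹ * Bᵀ)⁻¹ := by
  classical
  -- rows of B are linearly independent
  have hli : LinearIndependent ℝ (fun i => B i) := by
    rw [linearIndependent_iff_card_eq_finrank_span]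
    rw [Set.finrank, show (fun i => B i) = B.row from rfl, ← rank_eq_finrank_span_row, hB, Fintype.card_fin]
  have hBinj : Function.Injective B.vecMul := vecMul_injective_iff.mpr hli
  -- S := B A⁻¹ Bᵀ is PosDef
  set S := B * A⁻¹ * Bᵀ with hSdef
  have hS : S.PosDef := aux_posDef_conj hA.inv hBinj
  -- A_λ is PosDef
  set AL := A + l • (Bᵀ * M⁻¹ * B) with hALdef
  have hpsd : (l • (Bᵀ * M⁻¹ * B)).PosSemidef := by
    apply aux_posSemidef_smul _ hl
    have := hM.inv.posSemidef.conjTranspose_mul_mul_same B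
    rwa [conjTranspose_eq_transpose_of_trivial] at this
  have hAL : AL.PosDef := hA.add_posSemidef hpsd
  -- invertibility facts
  have hAd : IsUnit A.det := isUnit_iff_ne_zero.mpr hA.det_pos.ne'
  have hSd : IsUnit S.det := isUnit_iff_ne_zero.mpr hS.det_pos.ne'
  have hALd : IsUnit AL.det := isUnit_iff_ne_zero.mpr hAL.det_pos.ne'
  have h1 : A * A⁻¹ = 1 := mul_nonsing_inv _ hAd
  have h2 : S * S⁻¹ = 1 := mul_nonsing_inv _ hSd
  have h3 : AL⁻¹ * AL = 1 := nonsing_inv_mul _ hALd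
  -- key identity
  have key : Bᵀ * (l • M⁻¹ + S⁻¹) = AL * (A⁻¹ * Bᵀ * S⁻¹) := by
    rw [hALdef, Matrix.add_mul]
    have e1 : A * (A⁻¹ * Bᵀ * S⁻¹) = Bᵀ * S⁻¹ := by
      rw [← Matrix.mul_assoc, ← Matrix.mul_assoc, h1, Matrix.one_mul]
    have e2 : (l • (Bᵀ * M⁻¹ * B)) * (A⁻¹ * Bᵀ * S⁻¹) = Bᵀ * (l • M⁻¹) := by
      rw [Matrix.smul_mul]
      have : (Bᵀ * M⁻¹ * B) * (A⁻¹ * Bᵀ * S⁻¹) = Bᵀ * M⁻¹ := by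
        calc (Bᵀ * M⁻¹ * B) * (A⁻¹ * Bᵀ * S⁻¹)
            = (Bᵀ * M⁻¹) * ((B * A⁻¹ * Bᵀ) * S⁻¹) := by
              simp only [Matrix.mul_assoc]
          _ = Bᵀ * M⁻¹ := by rw [← hSdef, h2, Matrix.mul_one]
      rw [this, Matrix.mul_smul]
    rw [e1, e2, Matrix.mul_add, add_comm]
  have main : B * AL⁻¹ * Bᵀ * (l • M⁻¹ + S⁻¹) = 1 := by
    calc B * AL⁻¹ * Bᵀ * (l • M⁻¹ + S⁻¹)
        = B * AL⁻¹ * (Bᵀ * (l • M⁻¹ + S⁻¹)) := by simp only [Matrix.mul_assoc]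
      _ = B * ((AL⁻¹ * AL) * (A⁻¹ * Bᵀ * S⁻¹)) := by
          rw [key]; simp only [Matrix.mul_assoc]
      _ = (B * A⁻¹ * Bᵀ) * S⁻¹ := by
          rw [h3, Matrix.one_mul]; simp only [Matrix.mul_assoc]
      _ = 1 := by rw [← hSdef, h2]
  exact inv_eq_right_inv main
end

section
/- In the setting above, the spectral condition number of M^{-1/2} S_λ M^{-1/2} equals (λ s_♭ + 1) s_♯ / ((λ s_♯ + 1) s_♭), which is decreasing in λ and tends to 1 as λ → ∞. -/
open Matrix Filter

section helpers

variable {m : ℕ}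

lemma myPosDef_of_isUnit {W : Matrix (Fin m) (Fin m) ℝ}
    (h : W.PosSemidef) (hu : IsUnit W) : W.PosDef := by
  refine PosDef.of_dotProduct_mulVec_pos h.isHermitian (fun x hx => ?_)
  refine lt_of_le_of_ne (h.dotProduct_mulVec_nonneg x) (Ne.symm fun h0 => hx ?_)
  have hWx : W *ᵥ x = 0 := (h.dotProduct_mulVec_zero_iff x).mp h0
  have hx' : W⁻¹ *ᵥ (W *ᵥ x) = x := by
    rw [mulVec_mulVec, nonsing_inv_mul _ ((isUnit_iff_isUnit_det _).mp hu), one_mulVec]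
  rw [← hx', hWx, mulVec_zero]

lemma myPosSemidef_smul {X : Matrix (Fin m) (Fin m) ℝ} (h : X.PosSemidef)
    {l : ℝ} (hl : 0 ≤ l) : (l • X).PosSemidef := by
  refine PosSemidef.of_dotProduct_mulVec_nonneg ?_ (fun x => ?_)
  · show (l • X)ᴴ = l • X
    rw [conjTranspose_smul, h.isHermitian.eq, star_trivial]
  · rw [smul_mulVec, dotProduct_smul, smul_eq_mul]
    exact mul_nonneg hl (h.dotProduct_mulVec_nonneg x)

lemma myPosDef_conj {n : ℕ} {N : Matrix (Fin n) (Fin n) ℝ} (hN : N.PosDef)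
    (B : Matrix (Fin m) (Fin n) ℝ) (hinj : ∀ x : Fin m → ℝ, x ≠ 0 → Bᵀ *ᵥ x ≠ 0) :
    (B * N * Bᵀ).PosDef := by
  have hpsd : (B * N * Bᵀ).PosSemidef := by
    have := hN.posSemidef.mul_mul_conjTranspose_same B
    rwa [conjTranspose_eq_transpose_of_trivial] at this
  refine PosDef.of_dotProduct_mulVec_pos hpsd.isHermitian (fun x hx => ?_)
  have hBx : Bᵀ *ᵥ x ≠ 0 := hinj x hx
  have hB : (Bᵀ)ᴴ = B := by
    rw [conjTranspose_eq_transpose_of_trivial, transpose_transpose]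
  have key : star x ⬝ᵥ (B * N * Bᵀ) *ᵥ x = star (Bᵀ *ᵥ x) ⬝ᵥ N *ᵥ (Bᵀ *ᵥ x) := by
    rw [← hB]
    simp only [star_mulVec, dotProduct_mulVec, vecMul_vecMul,
      conjTranspose_eq_transpose_of_trivial, transpose_transpose]
  rw [key]
  exact hN.dotProduct_mulVec_pos hBx

end helpers

section spectrumHelpers

variable {m : ℕ}

/-- The eigenvector unitary as a unit of the matrix ring. -/
noncomputable def myUnit {T : Matrix (Fin m) (Fin m) ℝ} (hT : T.IsHermitian) :
    (Matrix (Fin m) (Fin m) ℝ)ˣ :=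
  ⟨(hT.eigenvectorUnitary : Matrix (Fin m) (Fin m) ℝ),
    star (hT.eigenvectorUnitary : Matrix (Fin m) (Fin m) ℝ),
    Matrix.mem_unitaryGroup_iff.mp hT.eigenvectorUnitary.2,
    Matrix.mem_unitaryGroup_iff'.mp hT.eigenvectorUnitary.2⟩

lemma myUnit_spectral {T : Matrix (Fin m) (Fin m) ℝ} (hT : T.IsHermitian) :
    T = (myUnit hT : Matrix (Fin m) (Fin m) ℝ) * diagonal hT.eigenvalues *
      ((myUnit hT)⁻¹ : (Matrix (Fin m) (Fin m) ℝ)ˣ) := by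
  have h := hT.spectral_theorem
  have hdiag : diagonal (RCLike.ofReal ∘ hT.eigenvalues) = diagonal hT.eigenvalues := by
    congr 1
  rw [hdiag] at h
  exact h

lemma mySpectrum_eq_range {T : Matrix (Fin m) (Fin m) ℝ} (hT : T.IsHermitian) :
    spectrum ℝ T = Set.range hT.eigenvalues := by
  conv_lhs => rw [myUnit_spectral hT]
  rw [spectrum.units_conjugate, spectrum_diagonal]

lemma myConj_inv {T : Matrix (Fin m) (Fin m) ℝ} (hT : T.IsHermitian)
    (D : Matrix (Fin m) (Fin m) ℝ) :
    ((myUnit hT : Matrix (Fin m) (Fin m) ℝ) * D *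
      ((myUnit hT)⁻¹ : (Matrix (Fin m) (Fin m) ℝ)ˣ))⁻¹ =
    (myUnit hT : Matrix (Fin m) (Fin m) ℝ) * D⁻¹ *
      ((myUnit hT)⁻¹ : (Matrix (Fin m) (Fin m) ℝ)ˣ) := by
  set u := myUnit hT
  rw [Matrix.mul_inv_rev, Matrix.mul_inv_rev, ← Matrix.coe_units_inv, inv_inv,
    ← Matrix.coe_units_inv, mul_assoc]

lemma myDiag_inv {μ : Fin m → ℝ} (hμ : ∀ i, 0 < μ i) :
    (diagonal μ)⁻¹ = diagonal (fun i => (μ i)⁻¹) := by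
  apply Matrix.inv_eq_right_inv
  rw [diagonal_mul_diagonal]
  convert diagonal_one with i
  exact mul_inv_cancel₀ (hμ i).ne'

lemma mySpectrum_resolvent {T : Matrix (Fin m) (Fin m) ℝ} (hT : T.PosDef) {l : ℝ}
    (hl : 0 ≤ l) :
    spectrum ℝ ((T⁻¹ + l • 1)⁻¹) =
      Set.range (fun i => ((hT.isHermitian.eigenvalues i)⁻¹ + l)⁻¹) := by
  set μ := hT.isHermitian.eigenvalues with hμdef
  have hμ : ∀ i, 0 < μ i := hT.eigenvalues_pos
  set u := myUnit hT.isHermitian with hu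
  have h1 : T⁻¹ + l • 1 = (u : Matrix (Fin m) (Fin m) ℝ) *
      diagonal (fun i => (μ i)⁻¹ + l) * ((u⁻¹ : _ˣ) : Matrix (Fin m) (Fin m) ℝ) := by
    have hsmul : l • (1 : Matrix (Fin m) (Fin m) ℝ) =
        (u : Matrix (Fin m) (Fin m) ℝ) * (l • 1) * ((u⁻¹ : _ˣ) : Matrix (Fin m) (Fin m) ℝ) := by
      rw [mul_smul_comm, mul_one, smul_mul_assoc, Units.mul_inv]
    conv_lhs => rw [myUnit_spectral hT.isHermitian, myConj_inv, myDiag_inv hμ, hsmul]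
    rw [← hu, ← add_mul, ← mul_add, Matrix.smul_one_eq_diagonal, diagonal_add]
  rw [h1, myConj_inv, myDiag_inv (fun i => by have := hμ i; positivity), spectrum.units_conjugate,
    spectrum_diagonal]

end spectrumHelpers
/-- Condition number of the augmented Lagrangian Schur complement: with
`S = B A⁻¹ Bᵀ` having extreme generalized eigenvalues `0 < s♭ ≤ s♯` relative to the SPD
matrix `M`, the spectral condition number of `M^{-1/2} S_λ M^{-1/2}` equals
`(λ s♭ + 1) s♯ / ((λ s♯ + 1) s♭)`, which is decreasing in `λ` on `[0,∞)` and tends to `1`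
as `λ → ∞`. -/
theorem augmented_lagrangian_condition_number {n m : ℕ}
    (A : Matrix (Fin n) (Fin n) ℝ) (B : Matrix (Fin m) (Fin n) ℝ)
    (M : Matrix (Fin m) (Fin m) ℝ)
    (hA : A.PosDef) (hB : B.rank = m) (hM : M.PosDef)
    -- `W = M^{-1/2}`, the positive semidefinite square root of `M⁻¹`
    (W : Matrix (Fin m) (Fin m) ℝ) (hMinv : (M⁻¹).PosSemidef) (hW : W = (hMinv.1.eigenvectorUnitary : Matrix (Fin m) (Fin m) ℝ) *
      diagonal (Real.sqrt ∘ hMinv.1.eigenvalues) *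
      (star hMinv.1.eigenvectorUnitary : Matrix (Fin m) (Fin m) ℝ))
    -- `S = B A⁻¹ Bᵀ`
    (S : Matrix (Fin m) (Fin m) ℝ) (hS : S = B * A⁻¹ * Bᵀ)
    -- `s♭`, `s♯` are the smallest and largest eigenvalues of `W * S * W`
    (sb ss : ℝ)
    (hsb : sb = sInf (spectrum ℝ (W * S * W))) (hss : ss = sSup (spectrum ℝ (W * S * W)))
    (hsb_pos : 0 < sb) (hsbss : sb ≤ ss)
    -- `S_λ = B A_λ⁻¹ Bᵀ` and `κ(λ)` is the spectral condition number of `W S_λ W`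
    (Sl : ℝ → Matrix (Fin m) (Fin m) ℝ)
    (hSl : ∀ l, Sl l = B * (A + l • (Bᵀ * M⁻¹ * B))⁻¹ * Bᵀ)
    (κ : ℝ → ℝ)
    (hκ : ∀ l, κ l = sSup (spectrum ℝ (W * Sl l * W)) / sInf (spectrum ℝ (W * Sl l * W))) :
    (∀ l, 0 ≤ l → κ l = (l * sb + 1) * ss / ((l * ss + 1) * sb)) ∧
      AntitoneOn κ (Set.Ici 0) ∧
      Tendsto κ atTop (nhds 1) := by
  have hss_pos : 0 < ss := lt_of_lt_of_le hsb_pos hsbss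
  -- rule out `m = 0`
  rcases Nat.eq_zero_or_pos m with hm0 | hm0
  · exfalso
    subst hm0
    haveI : Subsingleton (Matrix (Fin 0) (Fin 0) ℝ) :=
      ⟨fun a b => by ext i; exact i.elim0⟩
    have hemp : spectrum ℝ (W * S * W) = ∅ := by
      ext x
      simp only [Set.mem_empty_iff_false, iff_false]
      intro hx
      exact (spectrum.mem_iff.mp hx) (isUnit_of_subsingleton _)
    rw [hemp, Real.sInf_empty] at hsb
    rw [hsb] at hsb_pos
    exact lt_irrefl 0 hsb_pos
  haveI : Nonempty (Fin m) := ⟨⟨0, hm0⟩⟩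
  -- basic positivity and invertibility facts
  have hWpsd : W.PosSemidef := by
    rw [hW]
    have hD : (diagonal (Real.sqrt ∘ hMinv.1.eigenvalues)).PosSemidef :=
      PosSemidef.diagonal (fun i => Real.sqrt_nonneg _)
    have := hD.mul_mul_conjTranspose_same (hMinv.1.eigenvectorUnitary : Matrix (Fin m) (Fin m) ℝ)
    rwa [← star_eq_conjTranspose, ← Unitary.coe_star] at this
  have hW2 : W * W = M⁻¹ := by
    rw [hW]
    have hU : (star hMinv.1.eigenvectorUnitary : Matrix (Fin m) (Fin m) ℝ) *
        (hMinv.1.eigenvectorUnitary : Matrix (Fin m) (Fin m) ℝ) = 1 :=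
      Unitary.coe_star_mul_self _
    have hre : (hMinv.1.eigenvectorUnitary : Matrix (Fin m) (Fin m) ℝ) *
        diagonal (Real.sqrt ∘ hMinv.1.eigenvalues) *
        (star hMinv.1.eigenvectorUnitary : Matrix (Fin m) (Fin m) ℝ) *
        ((hMinv.1.eigenvectorUnitary : Matrix (Fin m) (Fin m) ℝ) *
        diagonal (Real.sqrt ∘ hMinv.1.eigenvalues) *
        (star hMinv.1.eigenvectorUnitary : Matrix (Fin m) (Fin m) ℝ)) =
        (hMinv.1.eigenvectorUnitary : Matrix (Fin m) (Fin m) ℝ) *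
        (diagonal (Real.sqrt ∘ hMinv.1.eigenvalues) *
        ((star hMinv.1.eigenvectorUnitary : Matrix (Fin m) (Fin m) ℝ) *
        (hMinv.1.eigenvectorUnitary : Matrix (Fin m) (Fin m) ℝ)) *
        diagonal (Real.sqrt ∘ hMinv.1.eigenvalues)) *
        (star hMinv.1.eigenvectorUnitary : Matrix (Fin m) (Fin m) ℝ) := by
      simp only [Matrix.mul_assoc]
    rw [hre, hU, Matrix.mul_one, diagonal_mul_diagonal]
    have hev : (fun i => (Real.sqrt ∘ hMinv.1.eigenvalues) i * (Real.sqrt ∘ hMinv.1.eigenvalues) i)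
        = hMinv.1.eigenvalues :=
      funext fun i => Real.mul_self_sqrt (hMinv.eigenvalues_nonneg i)
    rw [hev]
    exact (myUnit_spectral hMinv.1).symm
  have hMinvPD : (M⁻¹).PosDef := hM.inv
  have hWu : IsUnit W := by
    rw [Matrix.isUnit_iff_isUnit_det]
    have h2 : IsUnit (W.det * W.det) := by
      rw [← det_mul, hW2]
      exact (Matrix.isUnit_iff_isUnit_det _).mp hMinvPD.isUnit
    exact isUnit_of_mul_isUnit_left h2
  have hWdet : IsUnit W.det := (Matrix.isUnit_iff_isUnit_det _).mp hWu
  have hWW : W * W⁻¹ = 1 := mul_nonsing_inv W hWdet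
  have hW'W : W⁻¹ * W = 1 := nonsing_inv_mul W hWdet
  have hMdet : IsUnit M.det := (Matrix.isUnit_iff_isUnit_det _).mp hM.isUnit
  have hAdet : IsUnit A.det := (Matrix.isUnit_iff_isUnit_det _).mp hA.isUnit
  -- injectivity of `Bᵀ *ᵥ ·` from `rank B = m`
  have hBt : ∀ x : Fin m → ℝ, x ≠ 0 → Bᵀ *ᵥ x ≠ 0 := by
    have hrk : Bᵀ.rank = m := by rw [Matrix.rank_transpose]; exact hB
    have hker : LinearMap.ker Bᵀ.mulVecLin = ⊥ := by
      have h1 := LinearMap.finrank_range_add_finrank_ker Bᵀ.mulVecLin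
      have h2 : Module.finrank ℝ (LinearMap.range Bᵀ.mulVecLin) = m := hrk
      rw [h2, Module.finrank_pi ℝ, Fintype.card_fin] at h1
      have h3 : Module.finrank ℝ (LinearMap.ker Bᵀ.mulVecLin) = 0 := by omega
      exact Submodule.finrank_eq_zero.mp h3
    intro x hx hx0
    exact hx (Matrix.ker_mulVecLin_eq_bot_iff.mp hker x hx0)
  have hSpd : S.PosDef := by rw [hS]; exact myPosDef_conj hA.inv B hBt
  have hSdet : IsUnit S.det := (Matrix.isUnit_iff_isUnit_det _).mp hSpd.isUnit
  -- `T = W * S * W` is positive definite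
  have hTpd : (W * S * W).PosDef := by
    apply myPosDef_of_isUnit
    · have h := hSpd.posSemidef.mul_mul_conjTranspose_same W
      rwa [hWpsd.isHermitian.eq] at h
    · exact (hWu.mul hSpd.isUnit).mul hWu
  -- eigenvalue bookkeeping
  set μ : Fin m → ℝ := hTpd.isHermitian.eigenvalues with hμdef
  have hrange : spectrum ℝ (W * S * W) = Set.range μ :=
    mySpectrum_eq_range hTpd.isHermitian
  have hne : (Set.range μ).Nonempty := Set.range_nonempty μ
  have hfin : (Set.range μ).Finite := Set.finite_range μ
  have hμpos : ∀ i, 0 < μ i := hTpd.eigenvalues_pos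
  have hsb_mem : sb ∈ Set.range μ := by rw [hsb, hrange]; exact hne.csInf_mem hfin
  have hss_mem : ss ∈ Set.range μ := by rw [hss, hrange]; exact hne.csSup_mem hfin
  have hsb_le : ∀ i, sb ≤ μ i := by
    intro i; rw [hsb, hrange]; exact csInf_le hfin.bddBelow ⟨i, rfl⟩
  have hle_ss : ∀ i, μ i ≤ ss := by
    intro i; rw [hss, hrange]; exact le_csSup hfin.bddAbove ⟨i, rfl⟩
  -- the closed-form of κ on [0, ∞)
  have hformula : ∀ l, 0 ≤ l → κ l = (l * sb + 1) * ss / ((l * ss + 1) * sb) := by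
    intro l hl
    -- matrix identities
    set C : Matrix (Fin n) (Fin n) ℝ := Bᵀ * M⁻¹ * B with hC
    have hCpsd : C.PosSemidef := by
      have h := hMinvPD.posSemidef.conjTranspose_mul_mul_same B
      rwa [conjTranspose_eq_transpose_of_trivial] at h
    have hApl : (A + l • C).PosDef := hA.add_posSemidef (myPosSemidef_smul hCpsd hl)
    have hApl_det : IsUnit (A + l • C).det := (Matrix.isUnit_iff_isUnit_det _).mp hApl.isUnit
    have hstep1 : Bᵀ * M⁻¹ * (M + l • S) = (A + l • C) * (A⁻¹ * Bᵀ) := by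
      have l1 : Bᵀ * M⁻¹ * (M + l • S) = Bᵀ + l • (Bᵀ * M⁻¹ * S) := by
        rw [Matrix.mul_add, Matrix.mul_smul, Matrix.mul_assoc, nonsing_inv_mul M hMdet,
          Matrix.mul_one]
      have l2 : (A + l • C) * (A⁻¹ * Bᵀ) = Bᵀ + l • (C * (A⁻¹ * Bᵀ)) := by
        rw [Matrix.add_mul, Matrix.smul_mul, ← Matrix.mul_assoc, mul_nonsing_inv A hAdet,
          Matrix.one_mul]
      have l3 : Bᵀ * M⁻¹ * S = C * (A⁻¹ * Bᵀ) := by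
        rw [hS, hC]; simp only [Matrix.mul_assoc]
      rw [l1, l2, l3]
    have hstep2 : Sl l * (M⁻¹ * (M + l • S)) = S := by
      calc Sl l * (M⁻¹ * (M + l • S))
          = B * (A + l • C)⁻¹ * ((A + l • C) * (A⁻¹ * Bᵀ)) := by
            rw [hSl l, ← hstep1]; simp only [Matrix.mul_assoc]
        _ = B * (A⁻¹ * Bᵀ) := by
            rw [Matrix.mul_assoc, ← Matrix.mul_assoc ((A + l • C)⁻¹),
              nonsing_inv_mul _ hApl_det, Matrix.one_mul]
        _ = S := by rw [hS, Matrix.mul_assoc]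
    have hSinv_form : S⁻¹ + l • M⁻¹ = M⁻¹ * (M + l • S) * S⁻¹ := by
      rw [mul_add, nonsing_inv_mul M hMdet, add_mul, one_mul, mul_smul_comm,
        smul_mul_assoc, Matrix.mul_assoc, mul_nonsing_inv S hSdet, mul_one]
    have hXinv : Sl l * (S⁻¹ + l • M⁻¹) = 1 := by
      rw [hSinv_form, ← Matrix.mul_assoc, hstep2, mul_nonsing_inv S hSdet]
    have hY1 : (W * S * W)⁻¹ + l • 1 = W⁻¹ * (S⁻¹ + l • M⁻¹) * W⁻¹ := by
      rw [Matrix.mul_inv_rev, Matrix.mul_inv_rev, mul_add, add_mul]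
      congr 1
      · simp only [Matrix.mul_assoc]
      · rw [mul_smul_comm, smul_mul_assoc, ← hW2, ← Matrix.mul_assoc, hW'W, one_mul, hWW]
    have hmain : (W * Sl l * W) * ((W * S * W)⁻¹ + l • 1) = 1 := by
      rw [hY1]
      calc (W * Sl l * W) * (W⁻¹ * (S⁻¹ + l • M⁻¹) * W⁻¹)
          = W * Sl l * (W * W⁻¹) * (S⁻¹ + l • M⁻¹) * W⁻¹ := by
            simp only [Matrix.mul_assoc]
        _ = 1 := by
            rw [hWW, mul_one, Matrix.mul_assoc W (Sl l), hXinv, mul_one, hWW]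
    have hform : W * Sl l * W = ((W * S * W)⁻¹ + l • 1)⁻¹ :=
      (Matrix.inv_eq_left_inv hmain).symm
    have hspec : spectrum ℝ (W * Sl l * W) = Set.range fun i => ((μ i)⁻¹ + l)⁻¹ := by
      rw [hform, mySpectrum_resolvent hTpd hl]
    -- sup and inf of the transformed eigenvalues
    have hSup : sSup (Set.range fun i => ((μ i)⁻¹ + l)⁻¹) = (ss⁻¹ + l)⁻¹ := by
      apply IsGreatest.csSup_eq
      obtain ⟨i0, hi0⟩ := hss_mem
      refine ⟨⟨i0, by simp only [hi0]⟩, ?_⟩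
      rintro x ⟨i, rfl⟩
      have hinv : ss⁻¹ ≤ (μ i)⁻¹ := inv_anti₀ (hμpos i) (hle_ss i)
      exact inv_anti₀ (by positivity) (by linarith)
    have hInf : sInf (Set.range fun i => ((μ i)⁻¹ + l)⁻¹) = (sb⁻¹ + l)⁻¹ := by
      apply IsLeast.csInf_eq
      obtain ⟨i0, hi0⟩ := hsb_mem
      refine ⟨⟨i0, by simp only [hi0]⟩, ?_⟩
      rintro x ⟨i, rfl⟩
      have hinv : (μ i)⁻¹ ≤ sb⁻¹ := inv_anti₀ hsb_pos (hsb_le i)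
      exact inv_anti₀ (by have := hμpos i; positivity) (by linarith)
    rw [hκ l, hspec, hSup, hInf]
    have h1 : (0:ℝ) < ss⁻¹ + l := by positivity
    have h2 : (0:ℝ) < sb⁻¹ + l := by positivity
    rw [inv_div_inv]
    rw [div_eq_div_iff h1.ne' (by positivity : (0:ℝ) < (l * ss + 1) * sb).ne']
    field_simp
    ring
  refine ⟨hformula, ?_, ?_⟩
  · -- antitone
    intro a ha b hb hab
    simp only [Set.mem_Ici] at ha hb
    rw [hformula a ha, hformula b hb]
    rw [div_le_div_iff₀ (by positivity) (by positivity)]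
    nlinarith [mul_nonneg (mul_nonneg (mul_pos hsb_pos hss_pos).le
      (sub_nonneg.mpr hab)) (sub_nonneg.mpr hsbss)]
  · -- limit
    have heq : ∀ᶠ l in atTop, ((sb + l⁻¹) * ss) / ((ss + l⁻¹) * sb) = κ l := by
      filter_upwards [eventually_ge_atTop (1:ℝ)] with l hl1
      have hl0 : (0:ℝ) < l := lt_of_lt_of_le one_pos hl1
      rw [hformula l hl0.le]
      rw [div_eq_div_iff (by positivity : (0:ℝ) < (ss + l⁻¹) * sb).ne'
        (by positivity : (0:ℝ) < (l * ss + 1) * sb).ne']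
      field_simp
    have hlim : Tendsto (fun l : ℝ => ((sb + l⁻¹) * ss) / ((ss + l⁻¹) * sb)) atTop
        (nhds 1) := by
      have h1 : Tendsto (fun l : ℝ => (sb + l⁻¹) * ss) atTop (nhds (sb * ss)) := by
        have := (tendsto_const_nhds (x := sb) (f := atTop)).add tendsto_inv_atTop_zero
        simpa using this.mul tendsto_const_nhds
      have h2 : Tendsto (fun l : ℝ => (ss + l⁻¹) * sb) atTop (nhds (ss * sb)) := by
        have := (tendsto_const_nhds (x := ss) (f := atTop)).add tendsto_inv_atTop_zero
        simpa using this.mul tendsto_const_nhds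
      have h3 := h1.div h2 (by positivity)
      have h4 : sb * ss / (ss * sb) = 1 := by
        rw [mul_comm, div_self (by positivity)]
      rwa [h4] at h3
    exact hlim.congr' heq
end

section
/- Let V, Q be Hilbert spaces, a : V×V → ℝ a bounded coercive bilinear form, b : V×Q → ℝ a bounded bilinear form satisfying the inf-sup condition with constant β > 0, and f ∈ V'. Then there exists a unique pair (u,p) ∈ V×Q such that a(u,v) − b(v,p) = f(v) for all v ∈ V and b(u,q) = 0 for all q ∈ Q. -/
set_option maxHeartbeats 2000000

open InnerProductSpace RealInnerProductSpace

/-- Well-posedness of the abstract saddle point (generalized Stokes) problem: `V`, `Q`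
Hilbert spaces, `a` a bounded coercive bilinear form on `V`, `b` a bounded bilinear form on
`V × Q` satisfying the inf-sup condition with constant `β > 0`, and `f ∈ V'`. Then there is
a unique pair `(u, p)` with `a(u,v) − b(v,p) = f(v)` for all `v` and `b(u,q) = 0` for
all `q`. -/
theorem abstract_saddle_point_wellposed
    {V Q : Type*}
    [NormedAddCommGroup V] [InnerProductSpace ℝ V] [CompleteSpace V]
    [NormedAddCommGroup Q] [InnerProductSpace ℝ Q] [CompleteSpace Q]
    (a : V →ₗ[ℝ] V →ₗ[ℝ] ℝ) (b : V →ₗ[ℝ] Q →ₗ[ℝ] ℝ)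
    (Ca : ℝ) (ha_bdd : ∀ v w : V, |a v w| ≤ Ca * ‖v‖ * ‖w‖)
    (α : ℝ) (hα : 0 < α) (ha_coer : ∀ v : V, α * ‖v‖ ^ 2 ≤ a v v)
    (Cb : ℝ) (hb_bdd : ∀ (v : V) (q : Q), |b v q| ≤ Cb * ‖v‖ * ‖q‖)
    (β : ℝ) (hβ : 0 < β)
    (hinfsup : ∀ q : Q, β * ‖q‖ ≤ sSup ((fun v : V => b v q) '' {v : V | ‖v‖ ≤ 1}))
    (f : V →L[ℝ] ℝ) :
    ∃! up : V × Q, (∀ v : V, a up.1 v - b v up.2 = f v) ∧ (∀ q : Q, b up.1 q = 0) := by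
  classical
  -- continuous versions of the bilinear forms
  have hCa0 : ∀ v w : V, ‖a v w‖ ≤ max Ca 0 * ‖v‖ * ‖w‖ := by
    intro v w
    have h1 := ha_bdd v w
    have h2 : Ca * ‖v‖ * ‖w‖ ≤ max Ca 0 * ‖v‖ * ‖w‖ := by
      have := mul_nonneg (norm_nonneg v) (norm_nonneg w)
      nlinarith [le_max_left Ca 0]
    exact le_trans (by rw [Real.norm_eq_abs]; exact h1) h2
  set A : V →L[ℝ] V →L[ℝ] ℝ := LinearMap.mkContinuous₂ a (max Ca 0) hCa0 with hAdef
  have hA : ∀ v w, A v w = a v w := fun v w => rfl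
  have hCb0 : ∀ (v : V) (q : Q), ‖b v q‖ ≤ max Cb 0 * ‖v‖ * ‖q‖ := by
    intro v q
    have h1 := hb_bdd v q
    have h2 : Cb * ‖v‖ * ‖q‖ ≤ max Cb 0 * ‖v‖ * ‖q‖ := by
      have := mul_nonneg (norm_nonneg v) (norm_nonneg q)
      nlinarith [le_max_left Cb 0]
    exact le_trans (by rw [Real.norm_eq_abs]; exact h1) h2
  set Bc : V →L[ℝ] Q →L[ℝ] ℝ := LinearMap.mkContinuous₂ b (max Cb 0) hCb0 with hBcdef
  have hBc : ∀ v q, Bc v q = b v q := fun v q => rfl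
  -- Riesz representation
  have hsymm : ∀ (g : V →L[ℝ] ℝ) (v : V),
      ⟪(InnerProductSpace.toDual ℝ V).symm g, v⟫_ℝ = g v :=
    fun g v => InnerProductSpace.toDual_symm_apply
  -- the "adjoint" operator Bd : Q → V with ⟪Bd q, v⟫ = b v q
  set BdLin : Q →ₗ[ℝ] V :=
    { toFun := fun q => (InnerProductSpace.toDual ℝ V).symm (Bc.flip q)
      map_add' := fun q q' => by
        apply ext_inner_right ℝ
        intro v
        rw [inner_add_left, hsymm, hsymm, hsymm, map_add]
        rfl
      map_smul' := fun r q => by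
        apply ext_inner_right ℝ
        intro v
        rw [real_inner_smul_left, hsymm, hsymm, map_smul]
        rfl } with hBdLin
  have hBdLin_norm : ∀ q : Q, ‖BdLin q‖ ≤ ‖Bc.flip‖ * ‖q‖ := by
    intro q
    have : ‖BdLin q‖ = ‖Bc.flip q‖ := by
      simp [hBdLin, LinearIsometryEquiv.norm_map]
    rw [this]
    exact Bc.flip.le_opNorm q
  set Bd : Q →L[ℝ] V := BdLin.mkContinuous ‖Bc.flip‖ hBdLin_norm with hBddef
  have hBd_inner : ∀ (q : Q) (v : V), ⟪Bd q, v⟫_ℝ = b v q := fun q v => hsymm _ v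
  -- lower bound from the inf-sup condition
  have hBd_lower : ∀ q : Q, β * ‖q‖ ≤ ‖Bd q‖ := by
    intro q
    refine (hinfsup q).trans (Real.sSup_le ?_ (norm_nonneg _))
    rintro x ⟨v, hv, rfl⟩
    calc b v q = ⟪Bd q, v⟫_ℝ := (hBd_inner q v).symm
      _ ≤ ‖Bd q‖ * ‖v‖ := real_inner_le_norm _ _
      _ ≤ ‖Bd q‖ * 1 := mul_le_mul_of_nonneg_left hv (norm_nonneg _)
      _ = ‖Bd q‖ := mul_one _
  have hanti : AntilipschitzWith (⟨β⁻¹, inv_nonneg.2 hβ.le⟩ : NNReal) Bd := by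
    refine ContinuousLinearMap.antilipschitz_of_bound Bd ?_
    intro q
    have h := hBd_lower q
    show ‖q‖ ≤ β⁻¹ * ‖Bd q‖
    calc ‖q‖ = β⁻¹ * (β * ‖q‖) := by field_simp
      _ ≤ β⁻¹ * ‖Bd q‖ := by gcongr
  -- T = range Bd is a closed subspace
  set T : Submodule ℝ V := LinearMap.range (Bd : Q →ₗ[ℝ] V) with hTdef
  have hTclosed : IsClosed (T : Set V) := by
    have h := hanti.isClosed_range Bd.uniformContinuous
    have : (T : Set V) = Set.range Bd := by
      ext x; simp [hTdef, LinearMap.mem_range, Set.mem_range]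
    rw [this]
    exact h
  haveI : CompleteSpace T := hTclosed.completeSpace_coe
  -- Z = T^⊥ = kernel of b(·, q) for all q
  set Z : Submodule ℝ V := Tᗮ with hZdef
  haveI : CompleteSpace Z := (Submodule.isClosed_orthogonal T).completeSpace_coe
  -- the restricted bilinear form on Z
  set AZ : Z →L[ℝ] Z →L[ℝ] ℝ :=
    ((A.comp Z.subtypeL).flip.comp Z.subtypeL).flip with hAZdef
  have hAZ : ∀ x y : Z, AZ x y = a (x : V) (y : V) := fun x y => rfl
  have hcoer : IsCoercive AZ := by
    refine ⟨α, hα, fun x => ?_⟩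
    have h := ha_coer (x : V)
    have hn : ‖(x : V)‖ = ‖x‖ := rfl
    rw [hAZ, ← hn]
    calc α * ‖(x : V)‖ * ‖(x : V)‖ = α * ‖(x : V)‖ ^ 2 := by ring
      _ ≤ a (x : V) (x : V) := h
  -- Lax-Milgram on Z
  set e := hcoer.continuousLinearEquivOfBilin with hedef
  set fZ : Z →L[ℝ] ℝ := f.comp Z.subtypeL with hfZdef
  set u0 : Z := e.symm ((InnerProductSpace.toDual ℝ Z).symm fZ) with hu0def
  have hu0 : ∀ y : Z, a (u0 : V) (y : V) = f (y : V) := by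
    intro y
    have h1 : ⟪e u0, y⟫_ℝ = AZ u0 y := hcoer.continuousLinearEquivOfBilin_apply u0 y
    have h2 : e u0 = (InnerProductSpace.toDual ℝ Z).symm fZ := by
      rw [hu0def]; exact e.apply_symm_apply _
    have h3 : ⟪(InnerProductSpace.toDual ℝ Z).symm fZ, y⟫_ℝ = fZ y :=
      InnerProductSpace.toDual_symm_apply
    rw [← hAZ, ← h1, h2, h3]
    rfl
  set u : V := (u0 : V) with hudef
  have hu_mem : u ∈ Z := u0.2
  -- the residual functional and its Riesz representative
  set g : V →L[ℝ] ℝ := A u - f with hgdef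
  set wg : V := (InnerProductSpace.toDual ℝ V).symm g with hwgdef
  have hwg : ∀ v : V, ⟪wg, v⟫_ℝ = a u v - f v := by
    intro v
    rw [hwgdef, hsymm]
    simp [hgdef, hA]
  have hwg_mem : wg ∈ Zᗮ := by
    rw [Submodule.mem_orthogonal]
    intro y hy
    rw [real_inner_comm, hwg]
    have := hu0 ⟨y, hy⟩
    simp only [hudef] at this ⊢
    rw [this]
    ring
  have hwg_T : wg ∈ T := by
    rw [hZdef, Submodule.orthogonal_orthogonal] at hwg_mem
    exact hwg_mem
  obtain ⟨p, hp⟩ := hwg_T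
  replace hp : Bd p = wg := hp
  -- existence conditions
  have cond1 : ∀ v : V, a u v - b v p = f v := by
    intro v
    have h1 : b v p = ⟪Bd p, v⟫_ℝ := (hBd_inner p v).symm
    rw [h1, hp, hwg]
    ring
  have cond2 : ∀ q : Q, b u q = 0 := by
    intro q
    have h1 : b u q = ⟪Bd q, u⟫_ℝ := (hBd_inner q u).symm
    rw [h1]
    exact (Submodule.mem_orthogonal T u).mp hu_mem (Bd q) ⟨q, rfl⟩
  -- assemble existence and uniqueness
  clear_value A Bc BdLin Bd T Z AZ e fZ u0 u g wg
  clear hAdef hBcdef hBdLin hBddef hTdef hZdef hAZdef hedef hfZdef hu0def hudef hgdef hwgdef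
  refine ⟨(u, p), ⟨cond1, cond2⟩, ?_⟩
  rintro ⟨u', p'⟩ ⟨h1, h2⟩
  have hwb : ∀ q : Q, b (u' - u) q = 0 := by
    intro q
    rw [map_sub, LinearMap.sub_apply, h2 q, cond2 q, sub_zero]
  have haw : ∀ v : V, a (u' - u) v = b v (p' - p) := by
    intro v
    have hx := h1 v
    have hy := cond1 v
    rw [map_sub, LinearMap.sub_apply, map_sub]
    linarith
  have huu : u' = u := by
    have h0 : a (u' - u) (u' - u) = 0 := by
      rw [haw (u' - u)]
      exact hwb (p' - p)
    have hc := ha_coer (u' - u)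
    have hsq : ‖u' - u‖ ^ 2 = 0 := by nlinarith [sq_nonneg ‖u' - u‖]
    have : ‖u' - u‖ = 0 := by
      have := pow_eq_zero_iff (n := 2) (by norm_num) |>.mp hsq
      exact this
    have := norm_eq_zero.mp this
    exact sub_eq_zero.mp this
  have hbr : ∀ v : V, b v (p' - p) = 0 := by
    intro v
    rw [← haw v, huu, sub_self, map_zero]
    rfl
  have hpp : p' = p := by
    have h0 : β * ‖p' - p‖ ≤ 0 := by
      refine (hinfsup (p' - p)).trans (Real.sSup_le ?_ le_rfl)
      rintro x ⟨v, hv, rfl⟩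
      show b v (p' - p) ≤ 0
      rw [hbr v]
    have h3 : ‖p' - p‖ = 0 := by nlinarith [norm_nonneg (p' - p)]
    exact sub_eq_zero.mp (norm_eq_zero.mp h3)
  exact Prod.ext huu hpp
end

section
/- Let A = τ^{-1} M_V + μ E_V where M_V is SPD and E_V is symmetric positive semidefinite, τ, μ > 0. Then S = B A^{-1} B^T satisfies the operator inequalities τ (1 + τ μ λ_max(M_V^{-1}E_V))^{-1} B M_V^{-1} B^T ≼ S ≼ τ B M_V^{-1} B^T in the Loewner order. -/
open Matrix

section Aux

variable {n : ℕ}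

open scoped MatrixOrder

private lemma psd_smul {c : ℝ} (hc : 0 ≤ c) {A : Matrix (Fin n) (Fin n) ℝ}
    (hA : A.PosSemidef) : (c • A).PosSemidef := by
  refine PosSemidef.of_dotProduct_mulVec_nonneg ?_ (fun x => ?_)
  · unfold Matrix.IsHermitian
    rw [conjTranspose_smul, hA.1]
    simp
  · rw [smul_mulVec, dotProduct_smul, smul_eq_mul]
    exact mul_nonneg hc (hA.dotProduct_mulVec_nonneg x)

private lemma pd_smul {c : ℝ} (hc : 0 < c) {A : Matrix (Fin n) (Fin n) ℝ}
    (hA : A.PosDef) : (c • A).PosDef := by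
  refine PosDef.of_dotProduct_mulVec_pos ?_ (fun x hx => ?_)
  · unfold Matrix.IsHermitian
    rw [conjTranspose_smul, hA.1]
    simp
  · rw [smul_mulVec, dotProduct_smul, smul_eq_mul]
    exact mul_pos hc (hA.dotProduct_mulVec_pos hx)

private lemma one_sub_inv_psd {C : Matrix (Fin n) (Fin n) ℝ}
    (hC : C.PosSemidef) (hdet : IsUnit C.det) (h : (C - 1).PosSemidef) :
    (1 - C⁻¹).PosSemidef := by
  have hCinv : (C⁻¹).PosSemidef := hC.inv
  set D := CFC.sqrt (C⁻¹) with hDdef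
  have hDD : D * D = C⁻¹ := CFC.sqrt_mul_sqrt_self _ hCinv.nonneg
  have hdetCinv : IsUnit (C⁻¹).det := isUnit_nonsing_inv_det C hdet
  have hdetD : IsUnit D.det :=
    isUnit_of_mul_isUnit_left (y := D.det) (by rw [← det_mul, hDD]; exact hdetCinv)
  have hCform : C = D⁻¹ * D⁻¹ := by
    rw [← nonsing_inv_nonsing_inv C hdet, ← hDD, Matrix.mul_inv_rev]
  have hDCD : D * C * D = 1 := by
    rw [hCform, ← Matrix.mul_assoc D D⁻¹ D⁻¹, Matrix.mul_nonsing_inv _ hdetD,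
      Matrix.one_mul, Matrix.nonsing_inv_mul _ hdetD]
  have key : 1 - C⁻¹ = D * (C - 1) * D := by
    rw [Matrix.mul_sub, Matrix.mul_one, Matrix.sub_mul, hDCD, hDD]
  have hDH : Dᴴ = D := (CFC.sqrt_nonneg (C⁻¹)).posSemidef.1
  have := h.mul_mul_conjTranspose_same D
  rw [hDH, ← key] at this
  exact this

/-- Loewner antitonicity of the inverse on positive definite matrices. -/
private lemma inv_sub_inv_psd {M N : Matrix (Fin n) (Fin n) ℝ}
    (hM : M.PosDef) (hN : N.PosDef) (h : (N - M).PosSemidef) :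
    (M⁻¹ - N⁻¹).PosSemidef := by
  have hMdet : IsUnit M.det := isUnit_iff_ne_zero.mpr hM.det_pos.ne'
  have hNdet : IsUnit N.det := isUnit_iff_ne_zero.mpr hN.det_pos.ne'
  have hMinv : (M⁻¹).PosSemidef := hM.posSemidef.inv
  set P := CFC.sqrt (M⁻¹) with hPdef
  have hPP : P * P = M⁻¹ := CFC.sqrt_mul_sqrt_self _ hMinv.nonneg
  have hPH : Pᴴ = P := (CFC.sqrt_nonneg (M⁻¹)).posSemidef.1
  have hdetMinv : IsUnit (M⁻¹).det := isUnit_nonsing_inv_det M hMdet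
  have hdetP : IsUnit P.det :=
    isUnit_of_mul_isUnit_left (y := P.det) (by rw [← det_mul, hPP]; exact hdetMinv)
  have hMform : M = P⁻¹ * P⁻¹ := by
    rw [← nonsing_inv_nonsing_inv M hMdet, ← hPP, Matrix.mul_inv_rev]
  have hPMP : P * M * P = 1 := by
    rw [hMform, ← Matrix.mul_assoc P P⁻¹ P⁻¹, Matrix.mul_nonsing_inv _ hdetP,
      Matrix.one_mul, Matrix.nonsing_inv_mul _ hdetP]
  set C := P * N * P with hCdef
  have hCpsd : C.PosSemidef := by
    have := hN.posSemidef.mul_mul_conjTranspose_same P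
    rwa [hPH] at this
  have hCdet : IsUnit C.det := by
    rw [hCdef, det_mul, det_mul]
    exact (hdetP.mul hNdet).mul hdetP
  have hC1 : (C - 1).PosSemidef := by
    have := h.mul_mul_conjTranspose_same P
    rw [hPH] at this
    have heq : P * (N - M) * P = C - 1 := by
      rw [Matrix.mul_sub, Matrix.sub_mul, hPMP, hCdef]
    rwa [heq] at this
  have h1 : (1 - C⁻¹).PosSemidef := one_sub_inv_psd hCpsd hCdet hC1
  have hCinvform : C⁻¹ = P⁻¹ * N⁻¹ * P⁻¹ := by
    rw [hCdef, Matrix.mul_inv_rev, Matrix.mul_inv_rev, Matrix.mul_assoc]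
  have hPCP : P * C⁻¹ * P = N⁻¹ := by
    rw [hCinvform, ← Matrix.mul_assoc, ← Matrix.mul_assoc,
      Matrix.mul_nonsing_inv _ hdetP, Matrix.one_mul, Matrix.mul_assoc,
      Matrix.nonsing_inv_mul _ hdetP, Matrix.mul_one]
  have key : M⁻¹ - N⁻¹ = P * (1 - C⁻¹) * P := by
    rw [Matrix.mul_sub, Matrix.mul_one, Matrix.sub_mul, hPCP, hPP]
  have := h1.mul_mul_conjTranspose_same P
  rw [hPH, ← key] at this
  exact this

end Aux

/-- Loewner bounds justifying the small-`τμ` limit in the Cahouet–Chabard preconditioner: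
with `A = τ⁻¹ M_V + μ E_V` (`M_V` SPD, `E_V` symmetric PSD, `τ, μ > 0`) and `lmax` the
largest eigenvalue of the pencil `(E_V, M_V)`, the Schur complement `S = B A⁻¹ Bᵀ`
satisfies `τ (1 + τ μ lmax)⁻¹ B M_V⁻¹ Bᵀ ≼ S ≼ τ B M_V⁻¹ Bᵀ`. -/
theorem schur_loewner_bounds {n m : ℕ}
    (MV EV : Matrix (Fin n) (Fin n) ℝ) (B : Matrix (Fin m) (Fin n) ℝ)
    (hMV : MV.PosDef) (hEV : EV.PosSemidef)
    (τ μ : ℝ) (hτ : 0 < τ) (hμ : 0 < μ)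
    -- `lmax` is the largest eigenvalue of the pencil `(E_V, M_V)`:
    (lmax : ℝ) (hlmax0 : 0 ≤ lmax)
    (hlmax : ∀ x : Fin n → ℝ, x ⬝ᵥ EV.mulVec x ≤ lmax * (x ⬝ᵥ MV.mulVec x))
    (A : Matrix (Fin n) (Fin n) ℝ) (hA : A = τ⁻¹ • MV + μ • EV)
    (S : Matrix (Fin m) (Fin m) ℝ) (hS : S = B * A⁻¹ * Bᵀ) :
    (S - (τ * (1 + τ * μ * lmax)⁻¹) • (B * MV⁻¹ * Bᵀ)).PosSemidef ∧
      (τ • (B * MV⁻¹ * Bᵀ) - S).PosSemidef := by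
  have hBH : Bᴴ = Bᵀ := conjTranspose_eq_transpose_of_trivial B
  have hden : (0:ℝ) < 1 + τ * μ * lmax := by positivity
  set c : ℝ := τ * (1 + τ * μ * lmax)⁻¹ with hc
  have hcpos : 0 < c := by positivity
  have hMVdet : IsUnit MV.det := isUnit_iff_ne_zero.mpr hMV.det_pos.ne'
  have hM1 : (τ⁻¹ • MV).PosDef := pd_smul (by positivity) hMV
  have hApd : A.PosDef := by
    rw [hA]; exact hM1.add_posSemidef (psd_smul hμ.le hEV)
  -- upper bound part : τ • MV⁻¹ - A⁻¹ PSD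
  have hup : ((τ⁻¹ • MV)⁻¹ - A⁻¹).PosSemidef := by
    apply inv_sub_inv_psd hM1 hApd
    have : A - τ⁻¹ • MV = μ • EV := by rw [hA]; abel
    rw [this]; exact psd_smul hμ.le hEV
  have hsmul1 : (τ⁻¹ • MV)⁻¹ = τ • MV⁻¹ := by
    have : Invertible (τ⁻¹) := invertibleOfNonzero (by positivity)
    rw [MV.inv_smul τ⁻¹ hMVdet]
    congr 1
    rw [invOf_eq_inv, inv_inv]
  -- lower bound part : A⁻¹ - c • MV⁻¹ PSD
  have hM2 : (c⁻¹ • MV).PosDef := pd_smul (by positivity) hMV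
  have hlow : (A⁻¹ - (c⁻¹ • MV)⁻¹).PosSemidef := by
    apply inv_sub_inv_psd hApd hM2
    have hkey : (lmax • MV - EV).PosSemidef := by
      refine PosSemidef.of_dotProduct_mulVec_nonneg ?_ (fun x => ?_)
      · unfold Matrix.IsHermitian
        rw [conjTranspose_sub, conjTranspose_smul, hMV.1, hEV.1]
        simp
      · rw [sub_mulVec, dotProduct_sub, smul_mulVec, dotProduct_smul, smul_eq_mul]
        simpa using sub_nonneg.mpr (hlmax x)
    have hcinv : c⁻¹ = τ⁻¹ + μ * lmax := by
      rw [hc, mul_inv, inv_inv]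
      field_simp
    have heq : c⁻¹ • MV - A = (μ * lmax) • MV - μ • EV := by
      rw [hA, hcinv, add_smul]; abel
    rw [heq]
    have : (μ * lmax) • MV - μ • EV = μ • (lmax • MV - EV) := by
      rw [smul_sub, smul_smul]
    rw [this]
    exact psd_smul hμ.le hkey
  have hsmul2 : (c⁻¹ • MV)⁻¹ = c • MV⁻¹ := by
    have : Invertible (c⁻¹) := invertibleOfNonzero (by positivity)
    rw [MV.inv_smul c⁻¹ hMVdet]
    congr 1
    rw [invOf_eq_inv, inv_inv]
  rw [hsmul1] at hup
  rw [hsmul2] at hlow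
  constructor
  · have := hlow.mul_mul_conjTranspose_same B
    rw [hBH] at this
    have heq : B * (A⁻¹ - c • MV⁻¹) * Bᵀ = S - c • (B * MV⁻¹ * Bᵀ) := by
      rw [hS, Matrix.mul_sub, Matrix.sub_mul, Matrix.mul_smul, Matrix.smul_mul]
    rwa [heq] at this
  · have := hup.mul_mul_conjTranspose_same B
    rw [hBH] at this
    have heq : B * (τ • MV⁻¹ - A⁻¹) * Bᵀ = τ • (B * MV⁻¹ * Bᵀ) - S := by
      rw [hS, Matrix.mul_sub, Matrix.sub_mul, Matrix.mul_smul, Matrix.smul_mul]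
    rwa [heq] at this
end
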